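/- arXiv:1305.3455 — 2 statements merged into one kernel-verified Lean document; each statement's English description precedes it below -/
import Mathlib

section
/- For every r ≥ 1 and every list [i₁, …, i_r] over ZMod 3, the right complement of a_{i₁}·a_{i₂}·⋯·a_{i_r} equals a_{i_r+2}·a_{i_{r-1}+3}·⋯·a_{i₁+r+1}; that is, (a_{i₁}⋯a_{i_r})* = ∏_{j=1}^{r} a_{i_{r+1-j}+j+1}, all indices taken modulo 3. -/
namespace Braid

/-- Relations of the dual (band-generator) presentation of the 3-braid group:
`a (i+1) * a i = a (i+2) * a (i+1)` for all `i : ZMod 3`. -/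
def braidRels : Set (FreeGroup (ZMod 3)) :=
  { r | ∃ i : ZMod 3,
      r = FreeGroup.of (i + 1) * FreeGroup.of i *
          (FreeGroup.of (i + 2) * FreeGroup.of (i + 1))⁻¹ }

/-- The 3-braid group with the band-generator presentation. -/
abbrev B3 := PresentedGroup braidRels

/-- The band generators `a i`, `i : ZMod 3`. -/
def a (i : ZMod 3) : B3 := PresentedGroup.of i

/-- The fundamental element `δ = a₂ * a₁`. -/
def δ : B3 := a 2 * a 1

/-- The submonoid of positive braids. -/
def Pos : Submonoid B3 := Submonoid.closure (Set.range a)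

/-- The exponent-sum homomorphism, sending each generator to `1 : ℤ`. -/
def eHom : B3 →* Multiplicative ℤ :=
  PresentedGroup.toGroup (f := fun _ => Multiplicative.ofAdd (1 : ℤ)) (by
    rintro r ⟨i, rfl⟩
    simp only [map_mul, map_inv, FreeGroup.lift_apply_of]
    group)

/-- The exponent sum (letter length on positive braids) as an integer. -/
def elen (x : B3) : ℤ := Multiplicative.toAdd (eHom x)

/-- The right complement `X* = X⁻¹ * δ^{e(X)}`. -/
def rc (X : B3) : B3 := X⁻¹ * δ ^ elen X

/-- The `n`-th power of the rotation automorphism `τ`: `τ^n (x) = δ^{-n} * x * δ^n`. -/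
def tauPow (n : ℤ) (x : B3) : B3 := δ ^ (-n) * x * δ ^ n

/-- The positive braid represented by a list of generator indices. -/
def wordProd (l : List (ZMod 3)) : B3 := (l.map a).prod

/-- A word is nondecreasing if each letter index is the previous one or the previous one
plus `1` (mod 3). -/
def NDWord (l : List (ZMod 3)) : Prop :=
  l.Chain' (fun x y => y = x ∨ y = x + 1)

/-- The syllable number of a word: the number of maximal constant blocks. -/
def syl : List (ZMod 3) → ℕ
  | [] => 0
  | [_] => 1
  | x :: y :: t => (if x = y then 0 else 1) + syl (y :: t)

/-- The permutations underlying the band generators. -/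
def perm3 (i : ZMod 3) : Equiv.Perm (Fin 3) :=
  if i = 0 then Equiv.swap 0 2 else if i = 1 then Equiv.swap 0 1 else Equiv.swap 1 2

lemma perm3_rel : ∀ i : ZMod 3,
    perm3 (i + 1) * perm3 i * (perm3 (i + 2) * perm3 (i + 1))⁻¹ = 1 := by decide

/-- The homomorphism to the symmetric group on 3 letters (underlying permutation). -/
def permOf : B3 →* Equiv.Perm (Fin 3) :=
  PresentedGroup.toGroup (f := perm3) (by
    rintro r ⟨i, rfl⟩
    simp only [map_mul, map_inv, FreeGroup.lift_apply_of]
    exact perm3_rel i)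

/-- The set of band generators and their inverses. -/
def genSet : Set B3 := Set.range a ∪ Set.range (fun i => (a i)⁻¹)

/-- The band-generator word length of a 3-braid. -/
noncomputable def wordLen (x : B3) : ℕ :=
  sInf { n | ∃ s : List B3, s.length = n ∧ (∀ g ∈ s, g ∈ genSet) ∧ s.prod = x }

/-- The minimal band-generator word length in the conjugacy class. -/
noncomputable def minConjLen (x : B3) : ℕ :=
  sInf { n | ∃ y, IsConj x y ∧ wordLen y = n }

/-- `α` is a summit element with summit exponent `u` if `δ^{-u} * α` is positive and `u` is
the maximal such exponent over the conjugacy class. -/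
def IsSummit (α : B3) (u : ℤ) : Prop :=
  δ ^ (-u) * α ∈ Pos ∧ ∀ β : B3, IsConj α β → ∀ v : ℤ, δ ^ (-v) * β ∈ Pos → v ≤ u

lemma a_rel (i : ZMod 3) : a (i + 1) * a i = a (i + 2) * a (i + 1) := by
  have h : (QuotientGroup.mk (FreeGroup.of (i + 1) * FreeGroup.of i *
      (FreeGroup.of (i + 2) * FreeGroup.of (i + 1))⁻¹) : B3) = 1 :=
    (QuotientGroup.eq_one_iff _).mpr (Subgroup.subset_normalClosure ⟨i, rfl⟩)
  have h2 : a (i + 1) * a i * (a (i + 2) * a (i + 1))⁻¹ = 1 := h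
  rw [mul_inv_eq_one] at h2
  exact h2

lemma delta_eq (i : ZMod 3) : a (i + 1) * a i = δ := by
  have hi : i = 0 ∨ i = 1 ∨ i = 2 := by revert i; decide
  rcases hi with rfl | rfl | rfl
  · exact a_rel 0
  · rfl
  · exact (a_rel 1).symm

lemma delta_eq' (i : ZMod 3) : δ = a i * a (i + 2) := by
  have h := delta_eq (i + 2)
  rw [show i + 2 + 1 = i by rw [add_assoc, show (2:ZMod 3) + 1 = 0 by decide, add_zero]] at h
  exact h.symm

lemma a_inv_delta (i : ZMod 3) : (a i)⁻¹ * δ = a (i + 2) := by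
  rw [delta_eq' i]; group

lemma a_delta (j : ZMod 3) : a j * δ = δ * a (j + 1) := by
  have h1 : δ = a (j + 2) * a (j + 1) := by
    have h := delta_eq (j + 1)
    rw [show j + 1 + 1 = j + 2 by rw [add_assoc, show (1:ZMod 3) + 1 = 2 by decide]] at h
    exact h.symm
  conv_lhs => rw [h1]
  conv_rhs => rw [delta_eq' j]
  rw [mul_assoc]

lemma prod_shift (m : List (ZMod 3)) :
    (m.map a).prod * δ = δ * ((m.map (· + 1)).map a).prod := by
  induction m with
  | nil => simp
  | cons j t ih =>
    simp only [List.map_cons, List.prod_cons]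
    rw [mul_assoc, ih, ← mul_assoc, a_delta, mul_assoc]

lemma elen_a (i : ZMod 3) : elen (a i) = 1 := by
  simp [elen, a, eHom, PresentedGroup.toGroup.of]

lemma elen_mul (x y : B3) : elen (x * y) = elen x + elen y := by
  simp [elen, map_mul]

lemma elen_one : elen 1 = 0 := by simp [elen]

lemma rc_word_aux (l : List (ZMod 3)) :
    rc (wordProd l) =
      ((l.reverse.zipIdx).map (fun p => a (p.1 + (p.2 : ZMod 3) + 2))).prod := by
  induction l using List.reverseRecOn with
  | nil => simp [rc, wordProd, elen_one]
  | append_singleton t i ih =>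
    have hw : wordProd (t ++ [i]) = wordProd t * a i := by
      simp [wordProd]
    have he : elen (wordProd (t ++ [i])) = elen (wordProd t) + 1 := by
      rw [hw, elen_mul, elen_a]
    have key : rc (wordProd (t ++ [i])) = (a i)⁻¹ * rc (wordProd t) * δ := by
      rw [rc, rc, he, hw, mul_inv_rev, zpow_add_one]
      group
    have hmap : (t.reverse.zipIdx.map (fun p => a (p.1 + (p.2 : ZMod 3) + 2))) =
        ((t.reverse.zipIdx.map (fun p => p.1 + (p.2 : ZMod 3) + 2)).map a) := by
      rw [List.map_map]; rfl
    rw [key, ih, hmap, mul_assoc, prod_shift, ← mul_assoc, a_inv_delta]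
    rw [List.reverse_append, List.reverse_singleton, List.singleton_append,
      List.zipIdx_cons', List.map_cons, List.prod_cons]
    congr 1
    · congr 1
      push_cast
      ring
    · rw [List.map_map, List.map_map, List.map_map]
      congr 1
      apply List.map_congr_left
      intro p _
      simp only [Function.comp, Prod.map, id_eq]
      congr 1
      push_cast
      ring

/-- Lemma 2.2(ii): `(a_{i₁} a_{i₂} ⋯ a_{i_r})* = a_{i_r+2} a_{i_{r-1}+3} ⋯ a_{i₁+r+1}`. -/
theorem rc_word (l : List (ZMod 3)) (hl : 1 ≤ l.length) :
    rc (wordProd l) =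
      ((l.reverse.zipIdx).map (fun p => a (p.1 + (p.2 : ZMod 3) + 2))).prod :=
  rc_word_aux l
end Braid
end

section
/- Let r ≥ 1, let u ∈ ℤ with u ≡ −r (mod 3), and let k₁, …, k_r ≥ 1 all be odd. Then π(δᵘ·a₁^{k₁}·a₂^{k₂}·⋯·a_r^{k_r}) = π(a_{r+2})^{−r} (all generator indices modulo 3); in particular this permutation is a power of a transposition and is not a 3-cycle, so the closure of δᵘ·a₁^{k₁}·⋯·a_r^{k_r} is not a knot. -/
namespace Braid

lemma permOf_a (i : ZMod 3) : permOf (a i) = perm3 i := by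
  simp [permOf, a, PresentedGroup.toGroup.of]

lemma perm3_sq (c : ZMod 3) : perm3 c * perm3 c = 1 := by revert c; decide

lemma perm3_pow_two_mul (c : ZMod 3) (m : ℕ) : perm3 c ^ (2 * m) = 1 := by
  rw [pow_mul, pow_two, perm3_sq, one_pow]

lemma step_even (c : ZMod 3) :
    (perm3 2 * perm3 1)⁻¹ * perm3 (c + 1) = perm3 c := by revert c; decide

lemma step_odd (c : ZMod 3) :
    (perm3 2 * perm3 1)⁻¹ * (perm3 (c + 2) * perm3 (c + 1)) = 1 := by revert c; decide

lemma aux_prod (r : ℕ) :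
    ((perm3 2 * perm3 1)⁻¹) ^ r *
      (List.ofFn fun j : Fin r => perm3 (((j : ℕ) : ZMod 3) + 1)).prod =
    perm3 ((r : ZMod 3) + 2) ^ r := by
  induction r with
  | zero => simp
  | succ n ih =>
    rw [List.ofFn_succ', List.concat_eq_append, List.prod_append, List.prod_singleton,
      pow_succ']
    have : ((perm3 2 * perm3 1)⁻¹) ^ n *
        (List.ofFn fun j : Fin n => perm3 (((j : ℕ) : ZMod 3) + 1)).prod =
        perm3 ((n : ZMod 3) + 2) ^ n := ih
    calc (perm3 2 * perm3 1)⁻¹ * ((perm3 2 * perm3 1)⁻¹) ^ n *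
          ((List.ofFn fun j : Fin n =>
            perm3 ((((Fin.castSucc j : Fin (n+1)) : ℕ) : ZMod 3) + 1)).prod *
            perm3 (((Fin.last n : ℕ) : ZMod 3) + 1))
        = (perm3 2 * perm3 1)⁻¹ *
            (perm3 ((n : ZMod 3) + 2) ^ n * perm3 ((n : ZMod 3) + 1)) := by
          rw [← this]; simp [Fin.coe_castSucc, Fin.val_last, mul_assoc]
      _ = perm3 (((n+1 : ℕ) : ZMod 3) + 2) ^ (n + 1) := by
          have hc : (((n+1 : ℕ) : ZMod 3) + 2) = (n : ZMod 3) := by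
            push_cast; ring_nf
            rw [show (3 : ZMod 3) = 0 by decide, zero_add]
          rw [hc]
          rcases Nat.even_or_odd n with ⟨m, hm⟩ | ⟨m, hm⟩
          · subst hm
            rw [show m + m = 2 * m by ring, perm3_pow_two_mul, one_mul,
              pow_succ, perm3_pow_two_mul, one_mul, step_even]
          · subst hm
            rw [show 2 * m + 1 = 2 * m + 1 from rfl, pow_succ, perm3_pow_two_mul, one_mul,
              show 2 * m + 1 + 1 = 2 * (m + 1) by ring, perm3_pow_two_mul, ← mul_assoc,
              mul_assoc ((perm3 2 * perm3 1)⁻¹), step_odd]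

lemma perm3_pow_odd (c : ZMod 3) {n : ℕ} (h : Odd n) : perm3 c ^ n = perm3 c := by
  obtain ⟨m, rfl⟩ := h
  rw [pow_succ, perm3_pow_two_mul, one_mul]

lemma perm3_zpow_neg_nat (c : ZMod 3) (n : ℕ) :
    perm3 c ^ (-(n : ℤ)) = perm3 c ^ n := by
  rw [zpow_neg, zpow_natCast, inv_eq_iff_mul_eq_one, ← pow_add,
    show n + n = 2 * n by ring, perm3_pow_two_mul]

lemma P_cube : (perm3 2 * perm3 1) ^ (3 : ℕ) = 1 := by decide

/-- If `u ≡ -r (mod 3)` and all `k_j` are odd, then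
`π(δ^u a₁^{k₁} ⋯ a_r^{k_r}) = π(a_{r+2})^{-r}`, which is not a 3-cycle. -/
theorem perm_of_all_odd (r : ℕ) (hr : 1 ≤ r) (u : ℤ) (hu : (u + (r : ℤ)) % 3 = 0)
    (k : Fin r → ℕ) (hk : ∀ j, 1 ≤ k j) (hodd : ∀ j, Odd (k j)) (α : B3)
    (hα : α = δ ^ u *
      (List.ofFn (fun j : Fin r => (a (((j : ℕ) : ZMod 3) + 1)) ^ (k j))).prod) :
    permOf α = (permOf (a ((r : ZMod 3) + 2))) ^ (-(r : ℤ)) ∧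
    ¬ (permOf α).IsThreeCycle := by
  subst hα
  have hδ : permOf δ = perm3 2 * perm3 1 := by
    rw [δ, map_mul, permOf_a, permOf_a]
  obtain ⟨t, ht⟩ := Int.dvd_of_emod_eq_zero hu
  have hu' : u = -(r : ℤ) + 3 * t := by linarith
  have hP3 : (perm3 2 * perm3 1) ^ (3 * t : ℤ) = 1 := by
    rw [zpow_mul, show ((3 : ℤ)) = ((3 : ℕ) : ℤ) by norm_num, zpow_natCast, P_cube,
      one_zpow]
  have hprod : permOf
      (List.ofFn (fun j : Fin r => (a (((j : ℕ) : ZMod 3) + 1)) ^ (k j))).prod =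
      (List.ofFn fun j : Fin r => perm3 (((j : ℕ) : ZMod 3) + 1)).prod := by
    rw [map_list_prod, List.map_ofFn]
    refine congrArg List.prod (congrArg List.ofFn (funext fun j => ?_))
    simp only [Function.comp_apply, map_pow, permOf_a]
    exact perm3_pow_odd _ (hodd j)
  have key : permOf (δ ^ u *
      (List.ofFn (fun j : Fin r => (a (((j : ℕ) : ZMod 3) + 1)) ^ (k j))).prod) =
      perm3 ((r : ZMod 3) + 2) ^ r := by
    rw [map_mul, map_zpow, hδ, hprod, hu', zpow_add, hP3, mul_one, zpow_neg,
      zpow_natCast, ← inv_pow, aux_prod]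
  constructor
  · rw [key, permOf_a, perm3_zpow_neg_nat]
  · rw [key]
    intro h3
    have h2 : (perm3 ((r : ZMod 3) + 2) ^ r) ^ 2 = 1 := by
      rw [← pow_mul, show r * 2 = 2 * r by ring, perm3_pow_two_mul]
    have hd := orderOf_dvd_of_pow_eq_one h2
    rw [h3.orderOf] at hd
    norm_num at hd
end Braid
end
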